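/- Let T be a tree, let v be a support vertex of T having at least two leaf-neighbors, and let u be a leaf-neighbor of v. If T' is the tree obtained from T by deleting u, then γ_t2(T') = γ_t2(T). -/

import Mathlib

open SimpleGraph

/-- A dominating set: every vertex outside `S` has a neighbor in `S`. -/
def IsDominatingSet {V : Type} (G : SimpleGraph V) (S : Set V) : Prop :=
  ∀ v ∉ S, ∃ u ∈ S, G.Adj u v

/-- A total dominating set: every vertex has a neighbor in `S`. -/
def IsTotalDominatingSet {V : Type} (G : SimpleGraph V) (S : Set V) : Prop :=
  ∀ v : V, ∃ u ∈ S, G.Adj u v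

/-- `u` is within distance two of `v`. -/
def WithinTwo {V : Type} (G : SimpleGraph V) (u v : V) : Prop :=
  G.Adj u v ∨ ∃ w, G.Adj u w ∧ G.Adj w v

/-- A semitotal dominating set: a dominating set in which every vertex is within
distance two of another vertex of the set. -/
def IsSemitotalDominatingSet {V : Type} (G : SimpleGraph V) (S : Set V) : Prop :=
  IsDominatingSet G S ∧ ∀ v ∈ S, ∃ u ∈ S, u ≠ v ∧ WithinTwo G u v

/-- The domination number `γ(G)`. -/
noncomputable def dominationNumber {V : Type} (G : SimpleGraph V) : ℕ :=
  sInf {n | ∃ S : Set V, IsDominatingSet G S ∧ S.ncard = n}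

/-- The total domination number `γ_t(G)`. -/
noncomputable def totalDominationNumber {V : Type} (G : SimpleGraph V) : ℕ :=
  sInf {n | ∃ S : Set V, IsTotalDominatingSet G S ∧ S.ncard = n}

/-- The semitotal domination number `γ_t2(G)`. -/
noncomputable def semitotalDominationNumber {V : Type} (G : SimpleGraph V) : ℕ :=
  sInf {n | ∃ S : Set V, IsSemitotalDominatingSet G S ∧ S.ncard = n}

/-- A leaf: a vertex of degree one. -/
def IsLeaf {V : Type} (G : SimpleGraph V) (v : V) : Prop :=
  (G.neighborSet v).ncard = 1

/-- A support vertex: a vertex adjacent to a leaf. -/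
def IsSupport {V : Type} (G : SimpleGraph V) (v : V) : Prop :=
  ∃ u, G.Adj v u ∧ IsLeaf G u

/-- A star: a graph isomorphic to `K_{1,m}` for some `m ≥ 1`. -/
def IsStar {V : Type} (G : SimpleGraph V) : Prop :=
  ∃ m : ℕ, 1 ≤ m ∧ Nonempty (G ≃g completeBipartiteGraph Unit (Fin m))

/-- The graph obtained from the disjoint union of `G` and `H` by adding
the single edge joining `v : V` to `w : W`. -/
def attach {V W : Type} (G : SimpleGraph V) (H : SimpleGraph W) (v : V) (w : W) :
    SimpleGraph (V ⊕ W) where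
  Adj x y :=
    match x, y with
    | Sum.inl a, Sum.inl b => G.Adj a b
    | Sum.inr a, Sum.inr b => H.Adj a b
    | Sum.inl a, Sum.inr b => a = v ∧ b = w
    | Sum.inr a, Sum.inl b => b = v ∧ a = w
  symm := ⟨by
    rintro (a | a) (b | b) h
    · exact G.adj_symm h
    · exact ⟨h.1, h.2⟩
    · exact ⟨h.1, h.2⟩
    · exact H.adj_symm h⟩
  loopless := ⟨by
    rintro (a | a) h
    · exact G.irrefl h
    · exact H.irrefl h⟩

/-- The statuses used to label the vertices of trees in the family `𝒯`. -/
inductive Label : Type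
  | A | B | C
deriving DecidableEq

/-- The labeling of the path `P₅` assigning `A` to the two support vertices,
`C` to the two leaves and `B` to the center. -/
def pathLabel : Fin 5 → Label
  | 0 => Label.C
  | 1 => Label.A
  | 2 => Label.B
  | 3 => Label.A
  | 4 => Label.C

/-- The family `𝒯` of labeled trees: it contains the labeled path `P₅`, and is closed
under operation `𝒪₁` (attach a new leaf labeled `C` to a vertex labeled `A`), operation
`𝒪₂` (attach a labeled path `P₅` to a degree-one vertex labeled `C`), and under
isomorphism of labeled graphs. -/
inductive TFamily : ∀ {V : Type}, SimpleGraph V → (V → Label) → Prop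
  | base : TFamily (SimpleGraph.pathGraph 5) pathLabel
  | op1 {V : Type} {G : SimpleGraph V} {f : V → Label} (v : V)
      (hv : f v = Label.A) (h : TFamily G f) :
      TFamily (attach G (⊥ : SimpleGraph (Fin 1)) v 0)
        (Sum.elim f (fun _ => Label.C))
  | op2 {V : Type} {G : SimpleGraph V} {f : V → Label} (v : V)
      (hv : f v = Label.C) (hdeg : (G.neighborSet v).ncard = 1) (h : TFamily G f) :
      TFamily (attach G (SimpleGraph.pathGraph 5) v 0) (Sum.elim f pathLabel)
  | iso {V W : Type} {G : SimpleGraph V} {H : SimpleGraph W} {f : V → Label}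
      (e : G ≃g H) (h : TFamily G f) : TFamily H (fun w => f (e.symm w))

/-- The subdivided star with `t` leaves: center `none`, and for each `i : Fin t`
a path `none — some (i,0) — some (i,1)`. -/
def subdividedStar (t : ℕ) : SimpleGraph (Option (Fin t × Fin 2)) :=
  SimpleGraph.fromRel (fun x y =>
    match x, y with
    | none, some p => p.2 = 0
    | some p, some q => p.1 = q.1 ∧ p.2 = 0 ∧ q.2 = 1
    | _, _ => False)

/-- The tree `Y` with three leaves, obtained from the star `K_{1,3}` with center `0`
by subdividing exactly one edge: edges `0-1`, `0-2`, `0-3`, `3-4`.  Its leaves are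
`1`, `2`, `4`; the leaf-neighbors of the center are `1` and `2`. -/
def Ytree : SimpleGraph (Fin 5) :=
  SimpleGraph.fromRel (fun x y =>
    (x = 0 ∧ y = 1) ∨ (x = 0 ∧ y = 2) ∨ (x = 0 ∧ y = 3) ∨ (x = 3 ∧ y = 4))

/-- An almost dominating set of `G` relative to `v`: dominates every vertex except
possibly `v`. -/
def IsAlmostDominatingSet {V : Type} (G : SimpleGraph V) (v : V) (S : Set V) : Prop :=
  ∀ w, w ≠ v → w ∉ S → ∃ u ∈ S, G.Adj u w

/-- The almost domination number `γ(G; v)`. -/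
noncomputable def almostDominationNumber {V : Type} (G : SimpleGraph V) (v : V) : ℕ :=
  sInf {n | ∃ S : Set V, IsAlmostDominatingSet G v S ∧ S.ncard = n}

/-- The family `𝒪` of trees: all trees obtainable from the path `P₄` by a finite
sequence of the operations `𝒪₁`–`𝒪₄` (and taking isomorphic copies). -/
inductive OFamily : ∀ {V : Type}, SimpleGraph V → Prop
  | base : OFamily (SimpleGraph.pathGraph 4)
  | op1 {V : Type} {G : SimpleGraph V} (v : V)
      (hv : ∃ S : Set V, IsSemitotalDominatingSet G S ∧
        S.ncard = semitotalDominationNumber G ∧ v ∈ S)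
      (h : OFamily G) :
      OFamily (attach G (⊥ : SimpleGraph (Fin 1)) v 0)
  | op2short {V : Type} {G : SimpleGraph V} (v : V)
      (hv : almostDominationNumber G v = dominationNumber G) (h : OFamily G) :
      OFamily (attach G (SimpleGraph.pathGraph 2) v 0)
  | op2long {V : Type} {G : SimpleGraph V} (v : V)
      (hv : almostDominationNumber G v = dominationNumber G) (h : OFamily G) :
      OFamily (attach G (SimpleGraph.pathGraph 5) v 0)
  | op3 {V : Type} {G : SimpleGraph V} (v : V) (t : ℕ) (ht : 2 ≤ t) (h : OFamily G) :
      OFamily (attach G (subdividedStar t) v none)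
  | op4 {V : Type} {G : SimpleGraph V} (v : V) (h : OFamily G) :
      OFamily (attach G Ytree v 1)
  | iso {V W : Type} {G : SimpleGraph V} {H : SimpleGraph W}
      (e : G ≃g H) (h : OFamily G) : OFamily H

/-- A leaf's unique neighbor. -/
lemma leaf_adj_iff {V : Type} (G : SimpleGraph V) {u v : V} (hu : IsLeaf G u)
    (huv : G.Adj u v) : ∀ x, G.Adj u x ↔ x = v := by
  obtain ⟨a, ha⟩ := Set.ncard_eq_one.mp hu
  have hva : v = a := by
    have : v ∈ G.neighborSet u := huv
    rw [ha] at this; simpa using this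
  intro x
  constructor
  · intro hx
    have : x ∈ G.neighborSet u := hx
    rw [ha] at this
    simpa [← hva] using this
  · rintro rfl; exact huv

/-- Removing a leaf-neighbor of a support vertex having at least two
leaf-neighbors does not change the semitotal domination number. -/
theorem semitotal_delete_extra_leaf {V : Type} [Fintype V] (T : SimpleGraph V)
    (hT : T.IsTree) (v u : V) (huv : T.Adj v u) (hu : IsLeaf T u)
    (h2 : 2 ≤ {w : V | T.Adj v w ∧ IsLeaf T w}.ncard) :
    semitotalDominationNumber (T.induce {w : V | w ≠ u}) = semitotalDominationNumber T := by
  classical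
  have hvu : v ≠ u := huv.ne
  -- a second leaf-neighbor w of v, distinct from u
  obtain ⟨w, hw, hwu⟩ : ∃ w, (T.Adj v w ∧ IsLeaf T w) ∧ w ≠ u := by
    by_contra hcon
    push_neg at hcon
    have hsub : {w : V | T.Adj v w ∧ IsLeaf T w} ⊆ {u} := by
      intro x hx
      exact hcon x hx
    have := Set.ncard_le_ncard hsub (Set.finite_singleton u)
    simp only [Set.ncard_singleton] at this
    omega
  have hvw : T.Adj v w := hw.1
  have huAdj : ∀ x, T.Adj u x ↔ x = v := leaf_adj_iff T hu huv.symm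
  have hwAdj : ∀ x, T.Adj w x ↔ x = v := leaf_adj_iff T hw.2 hw.1.symm
  -- every vertex has a neighbor
  have hnbr : ∀ x : V, ∃ z, T.Adj x z := by
    intro x
    obtain ⟨y, hy⟩ : ∃ y : V, y ≠ x := by
      rcases eq_or_ne x u with rfl | h
      · exact ⟨v, hvu⟩
      · exact ⟨u, Ne.symm h⟩
    obtain ⟨p⟩ := hT.isConnected.preconnected x y
    cases p with
    | nil => exact absurd rfl hy
    | cons h q => exact ⟨_, h⟩
  have hnbr' : ∀ x : V, x ≠ u → ∃ z, T.Adj x z ∧ z ≠ u := by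
    intro x hx
    by_cases hxv : x = v
    · exact ⟨w, hxv ▸ hvw, hwu⟩
    · obtain ⟨z, hz⟩ := hnbr x
      refine ⟨z, hz, ?_⟩
      rintro rfl
      exact hxv ((huAdj x).mp hz.symm)
  set A : Set ℕ := {n | ∃ S : Set V, IsSemitotalDominatingSet T S ∧ S.ncard = n} with hA_def
  set B : Set ℕ := {n | ∃ S : Set ↥{w : V | w ≠ u},
      IsSemitotalDominatingSet (T.induce {w : V | w ≠ u}) S ∧ S.ncard = n} with hB_def
  have hadj' : ∀ a b : ↥{w : V | w ≠ u},
      (T.induce {w : V | w ≠ u}).Adj a b ↔ T.Adj ↑a ↑b := fun a b => Iff.rfl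
  have hAne : A.Nonempty := by
    refine ⟨_, Set.univ, ⟨fun x hx => absurd (Set.mem_univ x) hx, ?_⟩, rfl⟩
    intro x _
    obtain ⟨z, hz⟩ := hnbr x
    exact ⟨z, Set.mem_univ z, hz.ne', Or.inl hz.symm⟩
  have hBne : B.Nonempty := by
    refine ⟨_, Set.univ, ⟨fun x hx => absurd (Set.mem_univ x) hx, ?_⟩, rfl⟩
    intro x _
    obtain ⟨z, hzadj, hzu⟩ := hnbr' x.1 x.2
    refine ⟨⟨z, hzu⟩, Set.mem_univ _, ?_, Or.inl ((hadj' _ _).mpr hzadj.symm)⟩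
    intro h
    exact hzadj.ne' (congrArg Subtype.val h)
  show sInf B = sInf A
  apply le_antisymm
  · -- sInf B ≤ sInf A
    obtain ⟨S, hS, hsize⟩ := Nat.sInf_mem hAne
    -- construct a semitotal dominating set of T avoiding u, no bigger than S
    obtain ⟨S₂, hS₂, hu₂, hle₂⟩ : ∃ S₂ : Set V,
        IsSemitotalDominatingSet T S₂ ∧ u ∉ S₂ ∧ S₂.ncard ≤ S.ncard := by
      by_cases huS : u ∈ S
      · by_cases hvS : v ∈ S
        · -- replace u by w
          have hmemv : v ∈ insert w (S \ {u}) := Or.inr ⟨hvS, hvu⟩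
          have hmemw : w ∈ insert w (S \ {u}) := Or.inl rfl
          refine ⟨insert w (S \ {u}), ⟨?_, ?_⟩, ?_, ?_⟩
          · intro x hx
            rcases eq_or_ne x u with rfl | hxu
            · exact ⟨v, hmemv, huv⟩
            · have hxS : x ∉ S := fun h => hx (Or.inr ⟨h, hxu⟩)
              obtain ⟨y, hyS, hyx⟩ := hS.1 x hxS
              rcases eq_or_ne y u with rfl | hyu
              · exact absurd (((huAdj x).mp hyx) ▸ hmemv) hx
              · exact ⟨y, Or.inr ⟨hyS, hyu⟩, hyx⟩
          · intro s hs
            rcases hs with rfl | hs'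
            · exact ⟨v, hmemv, hvw.ne, Or.inl hvw⟩
            · obtain ⟨p, hpS, hps, hp2⟩ := hS.2 s hs'.1
              rcases eq_or_ne p u with rfl | hpu
              · rcases hp2 with h1 | ⟨m, hm1, hm2⟩
                · have hsv : s = v := (huAdj s).mp h1
                  subst hsv
                  exact ⟨w, hmemw, hvw.ne', Or.inl hvw.symm⟩
                · have hmv : m = v := (huAdj m).mp hm1
                  have hm2' : T.Adj v s := hmv ▸ hm2
                  exact ⟨v, hmemv, hm2'.ne, Or.inl hm2'⟩
              · exact ⟨p, Or.inr ⟨hpS, hpu⟩, hps, hp2⟩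
          · rintro (h | h)
            · exact hwu h.symm
            · exact h.2 rfl
          · calc (insert w (S \ {u})).ncard ≤ (S \ {u}).ncard + 1 :=
                Set.ncard_insert_le _ _
              _ = S.ncard := Set.ncard_diff_singleton_add_one huS
        · -- v ∉ S : then w ∈ S; replace u by v
          have hwS : w ∈ S := by
            by_contra hwS
            obtain ⟨y, hyS, hyw⟩ := hS.1 w hwS
            exact hvS (((hwAdj y).mp hyw.symm) ▸ hyS)
          have hmemv : v ∈ insert v (S \ {u}) := Or.inl rfl
          have hmemw : w ∈ insert v (S \ {u}) := Or.inr ⟨hwS, hwu⟩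
          refine ⟨insert v (S \ {u}), ⟨?_, ?_⟩, ?_, ?_⟩
          · intro x hx
            rcases eq_or_ne x u with rfl | hxu
            · exact ⟨v, hmemv, huv⟩
            · have hxS : x ∉ S := fun h => hx (Or.inr ⟨h, hxu⟩)
              obtain ⟨y, hyS, hyx⟩ := hS.1 x hxS
              rcases eq_or_ne y u with rfl | hyu
              · exact absurd (((huAdj x).mp hyx) ▸ hmemv) hx
              · exact ⟨y, Or.inr ⟨hyS, hyu⟩, hyx⟩
          · intro s hs
            rcases hs with rfl | hs'
            · exact ⟨w, hmemw, hvw.ne', Or.inl hvw.symm⟩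
            · obtain ⟨p, hpS, hps, hp2⟩ := hS.2 s hs'.1
              rcases eq_or_ne p u with rfl | hpu
              · rcases hp2 with h1 | ⟨m, hm1, hm2⟩
                · have hsv : s = v := (huAdj s).mp h1
                  exact absurd (hsv ▸ hs'.1) hvS
                · have hmv : m = v := (huAdj m).mp hm1
                  have hm2' : T.Adj v s := hmv ▸ hm2
                  exact ⟨v, hmemv, hm2'.ne, Or.inl hm2'⟩
              · exact ⟨p, Or.inr ⟨hpS, hpu⟩, hps, hp2⟩
          · rintro (h | h)
            · exact hvu h.symm
            · exact h.2 rfl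
          · calc (insert v (S \ {u})).ncard ≤ (S \ {u}).ncard + 1 :=
                Set.ncard_insert_le _ _
              _ = S.ncard := Set.ncard_diff_singleton_add_one huS
      · exact ⟨S, hS, huS, le_rfl⟩
    -- transfer S₂ to the induced subgraph
    set S' : Set ↥{w : V | w ≠ u} := {x | ↑x ∈ S₂} with hS'_def
    have himg : Subtype.val '' S' = S₂ := by
      ext y
      constructor
      · rintro ⟨x, hx, rfl⟩; exact hx
      · intro hy
        exact ⟨⟨y, fun h => hu₂ (h ▸ hy)⟩, hy, rfl⟩
    have hcard' : S'.ncard = S₂.ncard := by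
      rw [← himg, Set.ncard_image_of_injective _ Subtype.coe_injective]
    have hS'dom : IsSemitotalDominatingSet (T.induce {w : V | w ≠ u}) S' := by
      constructor
      · intro x hx
        obtain ⟨y, hyS, hyx⟩ := hS₂.1 x.1 hx
        have hyu : y ≠ u := fun h => hu₂ (h ▸ hyS)
        exact ⟨⟨y, hyu⟩, hyS, (hadj' _ _).mpr hyx⟩
      · intro x hx
        obtain ⟨p, hpS, hpx, hp2⟩ := hS₂.2 x.1 hx
        have hpu : p ≠ u := fun h => hu₂ (h ▸ hpS)
        refine ⟨⟨p, hpu⟩, hpS, fun h => hpx (congrArg Subtype.val h), ?_⟩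
        rcases hp2 with h1 | ⟨m, hm1, hm2⟩
        · exact Or.inl ((hadj' _ _).mpr h1)
        · have hmu : m ≠ u := by
            rintro rfl
            exact hpx (((huAdj p).mp hm1.symm).trans ((huAdj x.1).mp hm2).symm)
          exact Or.inr ⟨⟨m, hmu⟩, (hadj' _ _).mpr hm1, (hadj' _ _).mpr hm2⟩
    have : S'.ncard ∈ B := ⟨S', hS'dom, rfl⟩
    calc sInf B ≤ S'.ncard := Nat.sInf_le this
      _ = S₂.ncard := hcard'
      _ ≤ S.ncard := hle₂
      _ = sInf A := hsize
  · -- sInf A ≤ sInf B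
    obtain ⟨S', hS', hsize'⟩ := Nat.sInf_mem hBne
    set S₀ : Set V := Subtype.val '' S' with hS₀_def
    have hcard₀ : S₀.ncard = S'.ncard :=
      Set.ncard_image_of_injective _ Subtype.coe_injective
    have hS₀u : u ∉ S₀ := by
      rintro ⟨x, -, hxu⟩
      exact x.2 hxu
    have hdom0 : ∀ x, x ≠ u → x ∉ S₀ → ∃ y ∈ S₀, T.Adj y x := by
      intro x hxu hxS
      have hx' : (⟨x, hxu⟩ : ↥{w : V | w ≠ u}) ∉ S' := fun h => hxS ⟨_, h, rfl⟩
      obtain ⟨y, hyS, hyx⟩ := hS'.1 _ hx'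
      exact ⟨y.1, ⟨y, hyS, rfl⟩, (hadj' _ _).mp hyx⟩
    have hsemi0 : ∀ s ∈ S₀, ∃ p ∈ S₀, p ≠ s ∧ WithinTwo T p s := by
      rintro s ⟨s', hs', rfl⟩
      obtain ⟨p, hpS, hps, hp2⟩ := hS'.2 s' hs'
      refine ⟨p.1, ⟨p, hpS, rfl⟩, Subtype.coe_injective.ne hps, ?_⟩
      rcases hp2 with h1 | ⟨m, hm1, hm2⟩
      · exact Or.inl ((hadj' _ _).mp h1)
      · exact Or.inr ⟨m.1, (hadj' _ _).mp hm1, (hadj' _ _).mp hm2⟩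
    obtain ⟨S, hS, hle⟩ : ∃ S : Set V,
        IsSemitotalDominatingSet T S ∧ S.ncard ≤ S₀.ncard := by
      by_cases hvS : v ∈ S₀
      · refine ⟨S₀, ⟨?_, hsemi0⟩, le_rfl⟩
        intro x hx
        rcases eq_or_ne x u with rfl | hxu
        · exact ⟨v, hvS, huv⟩
        · exact hdom0 x hxu hx
      · have hwS : w ∈ S₀ := by
          by_contra hwS
          obtain ⟨y, hyS, hyw⟩ := hdom0 w hwu hwS
          exact hvS (((hwAdj y).mp hyw.symm) ▸ hyS)
        have hmemv : v ∈ insert v (S₀ \ {w}) := Or.inl rfl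
        refine ⟨insert v (S₀ \ {w}), ⟨?_, ?_⟩, ?_⟩
        · intro x hx
          rcases eq_or_ne x u with rfl | hxu
          · exact ⟨v, hmemv, huv⟩
          rcases eq_or_ne x w with rfl | hxw
          · exact ⟨v, hmemv, hvw⟩
          have hxS : x ∉ S₀ := fun h => hx (Or.inr ⟨h, hxw⟩)
          obtain ⟨y, hyS, hyx⟩ := hdom0 x hxu hxS
          rcases eq_or_ne y w with rfl | hyw
          · exact absurd (((hwAdj x).mp hyx) ▸ hmemv) hx
          · exact ⟨y, Or.inr ⟨hyS, hyw⟩, hyx⟩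
        · intro s hs
          rcases hs with hsv | hs'
          · -- s = v : use the partner of w
            rw [hsv]
            obtain ⟨p, hpS, hpw, hp2⟩ := hsemi0 w hwS
            have hpv : p ≠ v := fun h => hvS (h ▸ hpS)
            refine ⟨p, Or.inr ⟨hpS, hpw⟩, hpv, ?_⟩
            rcases hp2 with h1 | ⟨m, hm1, hm2⟩
            · exact absurd ((hwAdj p).mp h1.symm) hpv
            · have hmv : m = v := (hwAdj m).mp hm2.symm
              exact Or.inl (hmv ▸ hm1)
          · obtain ⟨p, hpS, hps, hp2⟩ := hsemi0 s hs'.1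
            rcases eq_or_ne p w with rfl | hpw
            · rcases hp2 with h1 | ⟨m, hm1, hm2⟩
              · have hsv : s = v := (hwAdj s).mp h1
                exact absurd (hsv ▸ hs'.1) hvS
              · have hm2' : T.Adj v s := ((hwAdj m).mp hm1) ▸ hm2
                exact ⟨v, hmemv, hm2'.ne, Or.inl hm2'⟩
            · exact ⟨p, Or.inr ⟨hpS, hpw⟩, hps, hp2⟩
        · calc (insert v (S₀ \ {w})).ncard ≤ (S₀ \ {w}).ncard + 1 :=
              Set.ncard_insert_le _ _
            _ = S₀.ncard := Set.ncard_diff_singleton_add_one hwS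
    have : S.ncard ∈ A := ⟨S, hS, rfl⟩
    calc sInf A ≤ S.ncard := Nat.sInf_le this
      _ ≤ S₀.ncard := hle
      _ = S'.ncard := hcard₀
      _ = sInf B := hsize'
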